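/- For real x and y with y > 0, x R_C(y², y² + x²) = arctan(x/y). -/

import Mathlib

open MeasureTheory Real

noncomputable def RC (x y : ℝ) : ℝ :=
  (1/2) * ∫ t in Set.Ioi (0:ℝ), (Real.sqrt (t + x))⁻¹ * (t + y)⁻¹

noncomputable def RF (x y z : ℝ) : ℝ :=
  (1/2) * ∫ t in Set.Ioi (0:ℝ), (Real.sqrt ((t + x) * (t + y) * (t + z)))⁻¹

noncomputable def RD (x y z : ℝ) : ℝ :=
  (3/2) * ∫ t in Set.Ioi (0:ℝ),
    (Real.sqrt ((t + x) * (t + y)))⁻¹ * ((t + z) * Real.sqrt (t + z))⁻¹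

noncomputable def RJ (x y z p : ℝ) : ℝ :=
  (3/2) * ∫ t in Set.Ioi (0:ℝ),
    (Real.sqrt ((t + x) * (t + y) * (t + z)))⁻¹ * (t + p)⁻¹

noncomputable def RG (x y z : ℝ) : ℝ :=
  (1/4) * ∫ t in Set.Ioi (0:ℝ),
    (Real.sqrt ((t + x) * (t + y) * (t + z)))⁻¹ *
      (x / (t + x) + y / (t + y) + z / (t + z)) * t

lemma key (x y : ℝ) (hx : 0 < x) (hy : 0 < y) :
    x * RC (y ^ 2) (y ^ 2 + x ^ 2) = Real.arctan (x / y) := by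
  have hx0 : x ≠ 0 := hx.ne'
  set F : ℝ → ℝ := fun t => (2/x) * Real.arctan (Real.sqrt (t + y^2) / x) with hF
  have hderiv : ∀ t ∈ Set.Ioi (0:ℝ),
      HasDerivAt F ((Real.sqrt (t + y^2))⁻¹ * (t + (y^2 + x^2))⁻¹) t := by
    intro t ht
    have ht' : (0:ℝ) < t := ht
    have hty : 0 < t + y^2 := by positivity
    have hs : HasDerivAt (fun t : ℝ => Real.sqrt (t + y^2))
        (1 / (2 * Real.sqrt (t + y^2))) t := by
      have := (Real.hasDerivAt_sqrt hty.ne').comp t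
        ((hasDerivAt_id t).add_const (y^2))
      simpa [Function.comp_def] using this
    have ha : HasDerivAt (fun s : ℝ => Real.arctan (s / x))
        ((1 / (1 + (Real.sqrt (t + y^2) / x)^2)) * (1/x)) (Real.sqrt (t + y^2)) := by
      have := (Real.hasDerivAt_arctan (Real.sqrt (t + y^2) / x)).comp
        (Real.sqrt (t + y^2)) ((hasDerivAt_id _).div_const x)
      simpa [Function.comp_def] using this
    have h := ((ha.comp t hs).const_mul (2/x))
    refine h.congr_deriv ?_
    have hsq : Real.sqrt (t + y^2) ^ 2 = t + y^2 := Real.sq_sqrt hty.le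
    have hspos : 0 < Real.sqrt (t + y^2) := Real.sqrt_pos.mpr hty
    rw [div_pow, hsq]
    field_simp
    ring
  have hnn : ∀ t ∈ Set.Ioi (0:ℝ),
      0 ≤ (Real.sqrt (t + y^2))⁻¹ * (t + (y^2 + x^2))⁻¹ := by
    intro t ht
    have ht' : (0:ℝ) < t := ht
    positivity
  have hcont : ContinuousWithinAt F (Set.Ici 0) 0 := by
    exact (continuous_const.mul (Real.continuous_arctan.comp
      ((Real.continuous_sqrt.comp (continuous_id.add continuous_const)).div_const x))).continuousWithinAt
  have htend : Filter.Tendsto F Filter.atTop (nhds (π / x)) := by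
    have h1 : Filter.Tendsto (fun t : ℝ => Real.sqrt (t + y^2) / x)
        Filter.atTop Filter.atTop := by
      apply Filter.Tendsto.atTop_div_const hx
      have hsqrt : Filter.Tendsto Real.sqrt Filter.atTop Filter.atTop :=
        Filter.tendsto_atTop_atTop_of_monotone (fun a b h => Real.sqrt_le_sqrt h)
          (fun b => ⟨(max b 0)^2, by
            rw [Real.sqrt_sq (le_max_right b 0)]; exact le_max_left b 0⟩)
      exact hsqrt.comp (Filter.tendsto_atTop_add_const_right _ _ Filter.tendsto_id)
    have h2 := (Real.tendsto_arctan_atTop.comp h1).mono_right nhdsWithin_le_nhds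
    have := h2.const_mul (2/x)
    convert this using 2
    · rfl
    · ring
  have hint := integral_Ioi_of_hasDerivAt_of_nonneg hcont hderiv hnn htend
  have hF0 : F 0 = (2/x) * Real.arctan (y / x) := by
    simp [hF, Real.sqrt_sq hy.le]
  rw [RC, hint, hF0]
  have : Real.arctan (x / y) = π/2 - Real.arctan (y/x) := by
    rw [← Real.arctan_inv_of_pos (by positivity : 0 < y/x)]
    congr 1
    field_simp
  rw [this]
  field_simp

theorem stmt2 (x y : ℝ) (hy : 0 < y) :
    x * RC (y ^ 2) (y ^ 2 + x ^ 2) = Real.arctan (x / y) := by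
  rcases lt_trichotomy x 0 with hx | hx | hx
  · have h := key (-x) y (by linarith) hy
    rw [show ((-x)^2 : ℝ) = x^2 by ring, show (-x/y : ℝ) = -(x/y) by ring,
      Real.arctan_neg] at h
    linarith
  · simp [hx]
  · exact key x y hx hy
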